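/- Let f be convex on symmetric matrices and decompose as f = g + h with g differentiable convex and h(X) = ‖X‖_{1,Λ}. If D* minimizes the model m(Δ) := tr(∇g(X)^T Δ) + (1/2)vec(Δ)^T H vec(Δ) + h(X + Δ) with H positive definite, and D* = 0, then X satisfies the entrywise optimality condition: ∇_{ij}g(X) = −λ_{ij} if X_{ij} > 0, ∇_{ij}g(X) = λ_{ij} if X_{ij} < 0, and |∇_{ij}g(X)| ≤ λ_{ij} if X_{ij} = 0. -/

import Mathlib

open Matrix BigOperators

/-- Weighted elementwise ℓ1 norm `‖X‖_{1,Λ} = Σᵢⱼ Λᵢⱼ|Xᵢⱼ|`. -/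
noncomputable def norm1 {p : ℕ} (Λ X : Matrix (Fin p) (Fin p) ℝ) : ℝ :=
  ∑ i, ∑ j, Λ i j * |X i j|

/-- Vectorization of a matrix, as a function on index pairs. -/
def mvec {p : ℕ} (D : Matrix (Fin p) (Fin p) ℝ) : Fin p × Fin p → ℝ :=
  fun ij => D ij.1 ij.2

private lemma keyA (a c lam x : ℝ) (hc : 0 ≤ c) (hx : 0 < x)
    (h : ∀ t : ℝ, 0 ≤ t * a + t^2 * c + lam * (|x + t| - |x|)) :
    a = -lam := by
  have hineq : ∀ t, -x ≤ t → 0 ≤ t * (a + lam) + t^2 * c := by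
    intro t ht
    have habs : |x + t| - |x| = t := by
      rw [abs_of_pos hx, abs_of_nonneg (by linarith)]; ring
    have := h t
    rw [habs] at this
    nlinarith
  have hb : ∀ ε : ℝ, 0 < ε → ε ≤ x → |a + lam| ≤ ε * c := by
    intro ε hε hεx
    have h1 := hineq ε (by linarith)
    have h2 := hineq (-ε) (by linarith)
    rw [abs_le]
    constructor <;> nlinarith
  have hzero : |a + lam| ≤ 0 := by
    refine le_of_forall_pos_le_add ?_
    intro ε' hε'
    have hεpos : 0 < min x (ε' / (c + 1)) := lt_min hx (by positivity)
    have := hb _ hεpos (min_le_left _ _)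
    have h2 : min x (ε' / (c + 1)) ≤ ε' / (c + 1) := min_le_right _ _
    have : min x (ε' / (c + 1)) * c ≤ ε' := by
      calc min x (ε' / (c + 1)) * c ≤ ε' / (c + 1) * c := by nlinarith
        _ ≤ ε' := by rw [div_mul_eq_mul_div, div_le_iff₀ (by linarith)]; nlinarith
    linarith
  have : a + lam = 0 := abs_nonpos_iff.mp hzero
  linarith

private lemma keyC (a c lam x : ℝ) (hc : 0 ≤ c) (hx : x = 0)
    (h : ∀ t : ℝ, 0 ≤ t * a + t^2 * c + lam * (|x + t| - |x|)) :
    |a| ≤ lam := by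
  subst hx
  have hb : ∀ ε : ℝ, 0 < ε → |a| ≤ lam + ε * c := by
    intro ε hε
    have h1 := h ε
    have h2 := h (-ε)
    rw [show |(0:ℝ) + ε| = ε by rw [zero_add, abs_of_pos hε]] at h1
    rw [show |(0:ℝ) + -ε| = ε by rw [zero_add, abs_neg, abs_of_pos hε]] at h2
    simp only [abs_zero, sub_zero] at h1 h2
    rw [abs_le]
    constructor <;> nlinarith
  refine le_of_forall_pos_le_add ?_
  intro ε' hε'
  have hεpos : (0:ℝ) < ε' / (c + 1) := by positivity
  have := hb _ hεpos
  have : ε' / (c + 1) * c ≤ ε' := by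
    rw [div_mul_eq_mul_div, div_le_iff₀ (by linarith)]; nlinarith
  linarith

private lemma key (a c lam x : ℝ) (hc : 0 ≤ c)
    (h : ∀ t : ℝ, 0 ≤ t * a + t^2 * c + lam * (|x + t| - |x|)) :
    (0 < x → a = -lam) ∧ (x < 0 → a = lam) ∧ (x = 0 → |a| ≤ lam) := by
  refine ⟨fun hx => keyA a c lam x hc hx h, fun hx => ?_, fun hx => keyC a c lam x hc hx h⟩
  have := keyA (-a) c lam (-x) hc (by linarith) (fun t => by
    have := h (-t)
    have habs : |x + -t| = |-x + t| := by rw [← abs_neg]; ring_nf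
    have habs2 : |x| = |-x| := (abs_neg x).symm
    rw [habs, habs2] at this
    linarith [this])
  linarith

private lemma quad_scale {p : ℕ} (H : Matrix (Fin p × Fin p) (Fin p × Fin p) ℝ)
    (E : Matrix (Fin p) (Fin p) ℝ) (t : ℝ) :
    mvec (t • E) ⬝ᵥ (H *ᵥ mvec (t • E)) = t^2 * (mvec E ⬝ᵥ (H *ᵥ mvec E)) := by
  have hm : mvec (t • E) = t • mvec E := by funext ij; simp [mvec]
  rw [hm, Matrix.mulVec_smul, smul_dotProduct, dotProduct_smul, smul_eq_mul, smul_eq_mul]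
  ring

private lemma lin_offdiag {p : ℕ} (G : Matrix (Fin p) (Fin p) ℝ) (i j : Fin p) (t : ℝ) :
    ∑ a, ∑ b, G a b * (t • (single i j (1:ℝ) + single j i (1:ℝ))) a b
      = t * G i j + t * G j i := by
  simp only [Matrix.smul_apply, Matrix.add_apply, Matrix.single, Matrix.of_apply,
    smul_eq_mul, mul_add, mul_ite, mul_one, mul_zero, Finset.sum_add_distrib, ite_and]
  simp [Finset.sum_ite_eq, mul_comm]

private lemma lin_diag {p : ℕ} (G : Matrix (Fin p) (Fin p) ℝ) (i : Fin p) (t : ℝ) :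
    ∑ a, ∑ b, G a b * (t • single i i (1:ℝ)) a b = t * G i i := by
  simp only [Matrix.smul_apply, Matrix.single, Matrix.of_apply,
    smul_eq_mul, mul_ite, mul_one, mul_zero, ite_and]
  simp [Finset.sum_ite_eq, mul_comm]

private lemma norm1_offdiag {p : ℕ} (Λ X : Matrix (Fin p) (Fin p) ℝ) (i j : Fin p)
    (hij : i ≠ j) (t : ℝ) :
    norm1 Λ (X + t • (single i j (1:ℝ) + single j i (1:ℝ))) - norm1 Λ X
      = Λ i j * (|X i j + t| - |X i j|) + Λ j i * (|X j i + t| - |X j i|) := by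
  unfold norm1
  rw [← Finset.sum_sub_distrib]
  simp_rw [← Finset.sum_sub_distrib]
  have key : ∀ a b, Λ a b * |(X + t • (single i j (1:ℝ) + single j i (1:ℝ))) a b|
      - Λ a b * |X a b|
      = (if a = i then (if b = j then Λ i j * (|X i j + t| - |X i j|) else 0) else 0)
      + (if a = j then (if b = i then Λ j i * (|X j i + t| - |X j i|) else 0) else 0) := by
    intro a b
    simp only [Matrix.add_apply, Matrix.smul_apply, Matrix.single, Matrix.of_apply,
      smul_eq_mul]
    by_cases hai : a = i <;> by_cases hbj : b = j <;> by_cases haj : a = j <;>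
        by_cases hbi : b = i <;>
      subst_eqs <;> simp_all [eq_comm] <;> ring
  simp only [key, Finset.sum_add_distrib, Finset.sum_ite_irrel, Finset.sum_ite_eq',
    Finset.mem_univ, if_true, Finset.sum_const_zero]

private lemma norm1_diag {p : ℕ} (Λ X : Matrix (Fin p) (Fin p) ℝ) (i : Fin p) (t : ℝ) :
    norm1 Λ (X + t • single i i (1:ℝ)) - norm1 Λ X
      = Λ i i * (|X i i + t| - |X i i|) := by
  unfold norm1
  rw [← Finset.sum_sub_distrib]
  simp_rw [← Finset.sum_sub_distrib]
  have key : ∀ a b, Λ a b * |(X + t • single i i (1:ℝ)) a b| - Λ a b * |X a b|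
      = (if a = i then (if b = i then Λ i i * (|X i i + t| - |X i i|) else 0) else 0) := by
    intro a b
    simp only [Matrix.add_apply, Matrix.smul_apply, Matrix.single, Matrix.of_apply,
      smul_eq_mul]
    by_cases hai : a = i <;> by_cases hbi : b = i <;> subst_eqs <;> simp_all [eq_comm] <;> ring
  simp only [key, Finset.sum_ite_irrel, Finset.sum_ite_eq', Finset.mem_univ, if_true,
    Finset.sum_const_zero]

private lemma symm_offdiag {p : ℕ} (i j : Fin p) (t : ℝ) :
    (t • (single i j (1:ℝ) + single j i (1:ℝ))).IsSymm := by
  refine Matrix.IsSymm.ext fun a b => ?_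
  simp only [Matrix.smul_apply, Matrix.add_apply, Matrix.single, Matrix.of_apply,
    smul_eq_mul]
  by_cases h1 : i = a <;> by_cases h2 : j = b <;> by_cases h3 : j = a <;> by_cases h4 : i = b <;>
    simp_all <;> ring

private lemma symm_diag {p : ℕ} (i : Fin p) (t : ℝ) : (t • single i i (1:ℝ)).IsSymm := by
  refine Matrix.IsSymm.ext fun a b => ?_
  simp only [Matrix.smul_apply, Matrix.single, Matrix.of_apply, smul_eq_mul, and_comm]

/-- Let `G = ∇g(X)`, `H ≻ 0`, and consider the model
`m(Δ) = Σᵢⱼ Gᵢⱼ Δᵢⱼ + ½ vec(Δ)ᵀ H vec(Δ) + ‖X + Δ‖_{1,Λ}` (note `m(0) = ‖X‖_{1,Λ}`).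
If `Δ = 0` minimizes `m` over symmetric matrices, then `X` satisfies the entrywise
optimality condition: `Gᵢⱼ = −λᵢⱼ` if `Xᵢⱼ > 0`, `Gᵢⱼ = λᵢⱼ` if `Xᵢⱼ < 0`, and
`|Gᵢⱼ| ≤ λᵢⱼ` if `Xᵢⱼ = 0`. -/
theorem zero_newton_direction_implies_optimality {p : ℕ}
    (X G Λ : Matrix (Fin p) (Fin p) ℝ)
    (H : Matrix (Fin p × Fin p) (Fin p × Fin p) ℝ) (hH : H.PosDef)
    (hXs : X.IsSymm) (hGs : G.IsSymm) (hΛs : Λ.IsSymm) (hΛ : ∀ i j, 0 ≤ Λ i j)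
    (hmin : ∀ Δ : Matrix (Fin p) (Fin p) ℝ, Δ.IsSymm →
      norm1 Λ X ≤ ∑ i, ∑ j, G i j * Δ i j
        + (1 / 2) * (mvec Δ ⬝ᵥ (H *ᵥ mvec Δ)) + norm1 Λ (X + Δ)) :
    ∀ i j, (0 < X i j → G i j = -Λ i j) ∧ (X i j < 0 → G i j = Λ i j) ∧
      (X i j = 0 → |G i j| ≤ Λ i j) := by
  intro i j
  have hqnn : ∀ E : Matrix (Fin p) (Fin p) ℝ, 0 ≤ mvec E ⬝ᵥ (H *ᵥ mvec E) := by
    intro E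
    simpa using hH.posSemidef.dotProduct_mulVec_nonneg (mvec E)
  rcases eq_or_ne i j with rfl | hij
  · -- diagonal case
    set E := single i i (1:ℝ) with hE
    set q := mvec E ⬝ᵥ (H *ᵥ mvec E) with hq
    have hq0 : 0 ≤ q := hqnn E
    refine key (G i i) (q / 2) (Λ i i) (X i i) (by linarith) ?_
    intro t
    have hm := hmin (t • E) (symm_diag i t)
    rw [lin_diag G i t, quad_scale H E t] at hm
    have hn := norm1_diag Λ X i t
    nlinarith [hm, hn]
  · -- off-diagonal case
    set E := single i j (1:ℝ) + single j i (1:ℝ) with hE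
    set q := mvec E ⬝ᵥ (H *ᵥ mvec E) with hq
    have hq0 : 0 ≤ q := hqnn E
    refine key (G i j) (q / 4) (Λ i j) (X i j) (by linarith) ?_
    intro t
    have hm := hmin (t • E) (symm_offdiag i j t)
    rw [lin_offdiag G i j t, quad_scale H E t] at hm
    have hn := norm1_offdiag Λ X i j hij t
    have hGsym : G j i = G i j := hGs.apply i j
    have hΛsym : Λ j i = Λ i j := hΛs.apply i j
    have hXsym : X j i = X i j := hXs.apply i j
    rw [hGsym] at hm
    rw [hΛsym, hXsym] at hn
    nlinarith [hm, hn]
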